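/- Let N, W, n be positive integers with W, n ≤ N, p := W/N ∈ (0,1), and np(1−p) ≥ 1. Then the total variation distance between the hypergeometric distribution H(N, W, n) and the binomial distribution B(n, p) satisfies δ(H(N,W,n), B(n,p)) ≤ (n−1)/(N−1). -/

import Mathlib

open Finset

/-- pmf of the hypergeometric distribution `H(N,W,n)` at `k`. -/
noncomputable def hyperPMF (N W n k : ℕ) : ℝ :=
  ((W.choose k : ℝ) * ((N - W).choose (n - k) : ℝ)) / (N.choose n : ℝ)

/-- pmf of the binomial distribution `B(n,p)` at `k`. -/
noncomputable def binomPMF (n : ℕ) (p : ℝ) (k : ℕ) : ℝ :=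
  (n.choose k : ℝ) * p ^ k * (1 - p) ^ (n - k)

/-- total variation distance between `H(N,W,n)` and `B(n,p)`, as the maximal
deviation over subsets `A` of `{0,1,…,n}`. -/
noncomputable def tvDist (N W n : ℕ) (p : ℝ) : ℝ :=
  ⨆ A : Finset (Fin (n+1)), |∑ k ∈ A, (hyperPMF N W n k - binomPMF n p k)|

lemma bin_pos {n : ℕ} {p : ℝ} (hp0 : 0 < p) (hp1 : p < 1) {k : ℕ} (hk : k ≤ n) :
    0 < binomPMF n p k := by
  unfold binomPMF
  have h1 : (0:ℝ) < 1 - p := by linarith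
  have h2 : 0 < n.choose k := Nat.choose_pos hk
  positivity

lemma bin_nonneg {n : ℕ} {p : ℝ} (hp0 : 0 < p) (hp1 : p < 1) (k : ℕ) :
    0 ≤ binomPMF n p k := by
  unfold binomPMF
  have h1 : (0:ℝ) < 1 - p := by linarith
  positivity

lemma bin_rec {n : ℕ} (p : ℝ) {k : ℕ} (hk : k < n) :
    ((k:ℝ)+1) * (1-p) * binomPMF n p (k+1) = ((n:ℝ)-(k:ℝ)) * p * binomPMF n p k := by
  unfold binomPMF
  have h2 : (n.choose (k+1) : ℝ) * ((k:ℝ)+1) = (n.choose k : ℝ) * ((n:ℝ)-(k:ℝ)) := by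
    rw [show ((n:ℝ) - (k:ℝ)) = ((n - k : ℕ) : ℝ) by rw [Nat.cast_sub hk.le]]
    exact_mod_cast Nat.choose_succ_right_eq n k
  rw [show n - k = (n - (k+1)) + 1 by omega]
  linear_combination (p^(k+1) * (1-p)^(n - (k+1) + 1)) * h2

lemma bin_sum (n : ℕ) (p : ℝ) : ∑ k ∈ range (n+1), binomPMF n p k = 1 := by
  have h : ∑ k ∈ range (n+1), binomPMF n p k = (p + (1-p))^n := by
    rw [add_pow]
    exact Finset.sum_congr rfl (fun k _ => by unfold binomPMF; ring)
  rw [h, show p + (1-p) = 1 by ring, one_pow]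

lemma bin_S {n : ℕ} (p : ℝ) {j : ℕ} (hj : j ≤ n) :
    ∑ k ∈ range (j+1), ((n:ℝ)*p - (k:ℝ)) * binomPMF n p k
      = p * ((n:ℝ)-(j:ℝ)) * binomPMF n p j := by
  induction j with
  | zero => rw [Finset.sum_range_one]; push_cast; ring
  | succ i ih =>
    have hi : i < n := hj
    rw [Finset.sum_range_succ, ih hi.le]
    have hrec := bin_rec p hi
    push_cast
    linarith [hrec]

lemma bin_T {n : ℕ} (p : ℝ) {j : ℕ} (hj : j ≤ n) :
    ∑ k ∈ Ico (j+1) (n+1), ((k:ℝ) - (n:ℝ)*p) * binomPMF n p k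
      = p * ((n:ℝ)-(j:ℝ)) * binomPMF n p j := by
  have htot : ∑ k ∈ range (n+1), ((n:ℝ)*p - (k:ℝ)) * binomPMF n p k = 0 := by
    have := bin_S p (le_refl n)
    simpa using this
  have hsplit := Finset.sum_Ico_consecutive
    (fun k => ((n:ℝ)*p - (k:ℝ)) * binomPMF n p k)
    (Nat.zero_le (j+1)) (by omega : j+1 ≤ n+1)
  beta_reduce at hsplit
  rw [← Finset.range_eq_Ico, ← Finset.range_eq_Ico] at hsplit
  have hS := bin_S p hj
  have h2 : ∑ k ∈ Ico (j+1) (n+1), ((n:ℝ)*p - (k:ℝ)) * binomPMF n p k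
      = - (p * ((n:ℝ)-(j:ℝ)) * binomPMF n p j) := by
    have h3 : ∑ k ∈ Ico (j+1) (n+1), ((n:ℝ)*p - (k:ℝ)) * binomPMF n p k
        = ∑ k ∈ range (n+1), ((n:ℝ)*p - (k:ℝ)) * binomPMF n p k
          - ∑ k ∈ range (j+1), ((n:ℝ)*p - (k:ℝ)) * binomPMF n p k := by
      rw [← hsplit]; ring
    rw [h3, htot, hS]; ring
  calc ∑ k ∈ Ico (j+1) (n+1), ((k:ℝ) - (n:ℝ)*p) * binomPMF n p k
      = - ∑ k ∈ Ico (j+1) (n+1), ((n:ℝ)*p - (k:ℝ)) * binomPMF n p k := by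
        rw [← Finset.sum_neg_distrib]; exact Finset.sum_congr rfl (fun k _ => by ring)
    _ = p * ((n:ℝ)-(j:ℝ)) * binomPMF n p j := by rw [h2]; ring

lemma core {n : ℕ} {p : ℝ} (hp0 : 0 < p) (hp1 : p < 1) {i : ℕ}
    (hjn : i + 2 ≤ n) :
    (∑ k ∈ Ico (i+2) (n+1), binomPMF n p k) / (p * ((n:ℝ)-((i:ℝ)+1)))
      + (∑ k ∈ range (i+1), binomPMF n p k) / ((1-p) * ((i:ℝ)+1))
      ≤ 1 / ((n:ℝ) * p * (1-p)) := by
  have hq0 : (0:ℝ) < 1 - p := by linarith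
  set G := ∑ k ∈ range (i+1), binomPMF n p k with hG
  set R := ∑ k ∈ Ico (i+2) (n+1), binomPMF n p k with hR
  set Bj := binomPMF n p (i+1) with hBj
  have hGnn : 0 ≤ G := Finset.sum_nonneg fun k _ => bin_nonneg hp0 hp1 k
  have hRnn : 0 ≤ R := Finset.sum_nonneg fun k _ => bin_nonneg hp0 hp1 k
  have hBjpos : 0 < Bj := bin_pos hp0 hp1 (by omega)
  have hjnR : ((i:ℝ) + 1) + 1 ≤ (n:ℝ) := by exact_mod_cast hjn
  have ha : (0:ℝ) < p * ((n:ℝ)-((i:ℝ)+1)) := by apply mul_pos hp0; linarith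
  have hb : (0:ℝ) < (1-p) * ((i:ℝ)+1) := by positivity
  have hd : (0:ℝ) < (n:ℝ) * p * (1-p) := by
    have : (1:ℝ) ≤ (n:ℝ) := by linarith
    positivity
  have hsplit1 := Finset.sum_Ico_consecutive (fun k => binomPMF n p k)
    (Nat.zero_le (i+2)) (by omega : i+2 ≤ n+1)
  beta_reduce at hsplit1
  rw [← Finset.range_eq_Ico, ← Finset.range_eq_Ico] at hsplit1
  have htot : G + Bj + R = 1 := by
    have h2 : ∑ k ∈ range (i+2), binomPMF n p k = G + Bj := by
      rw [Finset.sum_range_succ]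
    rw [h2, bin_sum n p] at hsplit1
    linarith [hsplit1]
  have hstep : ((i:ℝ)+1) * (1-p) * Bj = ((n:ℝ)-(i:ℝ)) * p * binomPMF n p i :=
    bin_rec p (by omega)
  rcases le_total ((i:ℝ)+1) ((n:ℝ)*p) with hc | hc
  · -- case A : j ≤ np
    have h1 : ((n:ℝ)*p - ((i:ℝ)+1)) * G ≤ (1-p) * ((i:ℝ)+1) * Bj := by
      have e2 : ∑ k ∈ range (i+1), ((n:ℝ)*p - ((i:ℝ)+1)) * binomPMF n p k
          ≤ ∑ k ∈ range (i+1), ((n:ℝ)*p - (k:ℝ)) * binomPMF n p k := by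
        apply Finset.sum_le_sum
        intro k hk
        have hkj : (k:ℝ) ≤ (i:ℝ) + 1 := by
          have h3 : k ≤ i + 1 := by have := Finset.mem_range.mp hk; omega
          exact_mod_cast h3
        exact mul_le_mul_of_nonneg_right (by linarith) (bin_nonneg hp0 hp1 k)
      calc ((n:ℝ)*p - ((i:ℝ)+1)) * G
          = ∑ k ∈ range (i+1), ((n:ℝ)*p - ((i:ℝ)+1)) * binomPMF n p k := by
            rw [hG, Finset.mul_sum]
        _ ≤ ∑ k ∈ range (i+1), ((n:ℝ)*p - (k:ℝ)) * binomPMF n p k := e2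
        _ = p * ((n:ℝ)-(i:ℝ)) * binomPMF n p i := bin_S p (by omega)
        _ = (1-p) * ((i:ℝ)+1) * Bj := by linarith [hstep]
    have s1 : R / (p * ((n:ℝ)-((i:ℝ)+1))) ≤ R / ((n:ℝ)*p*(1-p)) := by
      rw [div_le_div_iff₀ ha hd]
      nlinarith [mul_nonneg (mul_nonneg hRnn hp0.le) (by linarith : (0:ℝ) ≤ (n:ℝ)*p - ((i:ℝ)+1))]
    have s2 : G / ((1-p)*((i:ℝ)+1)) ≤ (G + (1-p)*Bj) / ((n:ℝ)*p*(1-p)) := by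
      rw [div_le_div_iff₀ hb hd]
      nlinarith [mul_le_mul_of_nonneg_left h1 hq0.le, hq0, hGnn, hBjpos]
    have s3 : R / ((n:ℝ)*p*(1-p)) + (G + (1-p)*Bj) / ((n:ℝ)*p*(1-p)) ≤ 1 / ((n:ℝ)*p*(1-p)) := by
      rw [← add_div]
      have hE : (1-p)*Bj = Bj - p*Bj := by ring
      have hX : R + (G + (1-p)*Bj) ≤ 1 := by linarith [htot, mul_nonneg hp0.le hBjpos.le, hE]
      exact div_le_div_of_nonneg_right hX hd.le
    linarith [s1, s2, s3]
  · -- case B : np ≤ j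
    have h1 : (((i:ℝ)+1) - (n:ℝ)*p) * R ≤ p * ((n:ℝ)-((i:ℝ)+1)) * Bj := by
      have e2 : ∑ k ∈ Ico (i+2) (n+1), (((i:ℝ)+1) - (n:ℝ)*p) * binomPMF n p k
          ≤ ∑ k ∈ Ico (i+2) (n+1), ((k:ℝ) - (n:ℝ)*p) * binomPMF n p k := by
        apply Finset.sum_le_sum
        intro k hk
        have hkj : (i:ℝ) + 1 ≤ (k:ℝ) := by
          have h3 : i + 1 ≤ k := by have := (Finset.mem_Ico.mp hk).1; omega
          exact_mod_cast h3
        exact mul_le_mul_of_nonneg_right (by linarith) (bin_nonneg hp0 hp1 k)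
      have e3 : ∑ k ∈ Ico (i+1+1) (n+1), ((k:ℝ) - (n:ℝ)*p) * binomPMF n p k
          = p * ((n:ℝ)-((i:ℝ)+1)) * binomPMF n p (i+1) := by
        have := bin_T p (show i+1 ≤ n by omega)
        rw [this]
        push_cast
        ring
      calc (((i:ℝ)+1) - (n:ℝ)*p) * R
          = ∑ k ∈ Ico (i+2) (n+1), (((i:ℝ)+1) - (n:ℝ)*p) * binomPMF n p k := by
            rw [hR, Finset.mul_sum]
        _ ≤ ∑ k ∈ Ico (i+2) (n+1), ((k:ℝ) - (n:ℝ)*p) * binomPMF n p k := e2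
        _ = p * ((n:ℝ)-((i:ℝ)+1)) * Bj := e3
    have s1 : R / (p * ((n:ℝ)-((i:ℝ)+1))) ≤ (R + p*Bj) / ((n:ℝ)*p*(1-p)) := by
      rw [div_le_div_iff₀ ha hd]
      nlinarith [mul_le_mul_of_nonneg_left h1 hp0.le, hp0, hRnn, hBjpos]
    have s2 : G / ((1-p)*((i:ℝ)+1)) ≤ G / ((n:ℝ)*p*(1-p)) := by
      rw [div_le_div_iff₀ hb hd]
      nlinarith [mul_nonneg (mul_nonneg hGnn hq0.le) (by linarith : (0:ℝ) ≤ ((i:ℝ)+1) - (n:ℝ)*p)]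
    have s3 : (R + p*Bj) / ((n:ℝ)*p*(1-p)) + G / ((n:ℝ)*p*(1-p)) ≤ 1 / ((n:ℝ)*p*(1-p)) := by
      rw [← add_div]
      have hE : (1-p)*Bj = Bj - p*Bj := by ring
      have hX : R + p*Bj + G ≤ 1 := by linarith [htot, mul_nonneg hq0.le hBjpos.le, hE]
      exact div_le_div_of_nonneg_right hX hd.le
    linarith [s1, s2, s3]



noncomputable def chiF (A : Finset ℕ) (k : ℕ) : ℝ := if k ∈ A then 1 else 0

noncomputable def SF (n : ℕ) (p : ℝ) (A : Finset ℕ) (j : ℕ) : ℝ :=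
  ∑ k ∈ range j, (chiF A k - ∑ m ∈ A, binomPMF n p m) * binomPMF n p k

noncomputable def fF (n : ℕ) (p : ℝ) (A : Finset ℕ) (j : ℕ) : ℝ :=
  SF n p A j / ((1-p) * (j:ℝ) * binomPMF n p j)

lemma chi_decomp (A : Finset ℕ) (k : ℕ) : chiF A k = ∑ m ∈ A, chiF {m} k := by
  unfold chiF
  simp only [Finset.mem_singleton]
  rw [Finset.sum_ite_eq A k (fun _ => (1:ℝ))]

lemma SF_decomp (n : ℕ) (p : ℝ) (A : Finset ℕ) (j : ℕ) :
    SF n p A j = ∑ m ∈ A, SF n p {m} j := by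
  unfold SF
  rw [Finset.sum_comm]
  apply Finset.sum_congr rfl
  intro k _
  rw [chi_decomp A k]
  simp only [Finset.sum_singleton, sub_mul, Finset.sum_sub_distrib, Finset.sum_mul]

lemma fF_decomp (n : ℕ) (p : ℝ) (A : Finset ℕ) (j : ℕ) :
    fF n p A j = ∑ m ∈ A, fF n p {m} j := by
  unfold fF
  rw [SF_decomp, Finset.sum_div]

lemma SF_zero_mul (n : ℕ) {p : ℝ} (hp0 : 0 < p) (hp1 : p < 1) (A : Finset ℕ) {j : ℕ}
    (hj : j ≤ n) : (1-p) * (j:ℝ) * fF n p A j = SF n p A j / binomPMF n p j := by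
  rcases Nat.eq_zero_or_pos j with rfl | hjpos
  · simp [SF, fF]
  · unfold fF
    have hB : binomPMF n p j ≠ 0 := (bin_pos hp0 hp1 hj).ne'
    have hq : (1-p) ≠ 0 := by linarith
    have hjne : (j:ℝ) ≠ 0 := Nat.cast_ne_zero.mpr hjpos.ne'
    field_simp

lemma stein_eq (n : ℕ) {p : ℝ} (hp0 : 0 < p) (hp1 : p < 1) (A : Finset ℕ) {j : ℕ}
    (hj : j < n) :
    p * ((n:ℝ)-(j:ℝ)) * fF n p A (j+1) - (1-p) * (j:ℝ) * fF n p A j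
      = chiF A j - ∑ m ∈ A, binomPMF n p m := by
  have hB : binomPMF n p j ≠ 0 := (bin_pos hp0 hp1 hj.le).ne'
  have hB1 : binomPMF n p (j+1) ≠ 0 := (bin_pos hp0 hp1 hj).ne'
  have hq : (1:ℝ)-p ≠ 0 := by linarith
  have h1 : p * ((n:ℝ)-(j:ℝ)) * fF n p A (j+1) = SF n p A (j+1) / binomPMF n p j := by
    unfold fF
    have hrec := bin_rec p hj
    have hq1 : (0:ℝ) < 1 - p := by linarith
    have hB1pos := bin_pos hp0 hp1 (show j+1 ≤ n by omega)
    have hDpos : (0:ℝ) < (1-p) * ((j:ℝ)+1) * binomPMF n p (j+1) :=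
      mul_pos (mul_pos hq1 (by positivity)) hB1pos
    rw [show ((j+1 : ℕ):ℝ) = (j:ℝ)+1 by push_cast; ring]
    calc p * ((n:ℝ)-(j:ℝ)) * (SF n p A (j+1) / ((1-p) * ((j:ℝ)+1) * binomPMF n p (j+1)))
        = (p * ((n:ℝ)-(j:ℝ)) * SF n p A (j+1)) / ((1-p) * ((j:ℝ)+1) * binomPMF n p (j+1)) := by
          ring
      _ = SF n p A (j+1) / binomPMF n p j := by
          rw [div_eq_div_iff hDpos.ne' hB]
          linear_combination (-(SF n p A (j+1))) * hrec
  rw [h1, SF_zero_mul n hp0 hp1 A hj.le]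
  rw [div_sub_div_same]
  have h2 : SF n p A (j+1) - SF n p A j
      = (chiF A j - ∑ m ∈ A, binomPMF n p m) * binomPMF n p j := by
    unfold SF
    rw [Finset.sum_range_succ]
    ring
  rw [h2, mul_div_assoc, div_self hB, mul_one]

lemma SF_singleton (n : ℕ) (p : ℝ) (m j : ℕ) :
    SF n p {m} j = (if m < j then binomPMF n p m else 0)
      - binomPMF n p m * ∑ k ∈ range j, binomPMF n p k := by
  unfold SF
  rw [Finset.sum_singleton]
  have h1 : ∑ k ∈ range j, (chiF {m} k - binomPMF n p m) * binomPMF n p k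
      = ∑ k ∈ range j, (chiF {m} k * binomPMF n p k)
        - binomPMF n p m * ∑ k ∈ range j, binomPMF n p k := by
    rw [Finset.mul_sum, ← Finset.sum_sub_distrib]
    exact Finset.sum_congr rfl (fun k _ => by ring)
  rw [h1]
  congr 1
  unfold chiF
  simp only [Finset.mem_singleton]
  calc ∑ k ∈ range j, (if k = m then (1:ℝ) else 0) * binomPMF n p k
      = ∑ k ∈ range j, (if k = m then binomPMF n p k else 0) := by
        exact Finset.sum_congr rfl (fun k _ => by split <;> simp
        )
    _ = if m ∈ range j then binomPMF n p m else 0 := by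
        rw [Finset.sum_ite_eq' (range j) m (fun k => binomPMF n p k)]
    _ = if m < j then binomPMF n p m else 0 := by simp [Finset.mem_range]

lemma G_compl {n : ℕ} (p : ℝ) {t : ℕ} (ht : t ≤ n+1) :
    ∑ k ∈ Ico t (n+1), binomPMF n p k = 1 - ∑ k ∈ range t, binomPMF n p k := by
  have h := Finset.sum_Ico_consecutive (fun k => binomPMF n p k) (Nat.zero_le t) ht
  beta_reduce at h
  rw [← Finset.range_eq_Ico, ← Finset.range_eq_Ico] at h
  rw [bin_sum n p] at h
  linarith [h]

lemma mono_left {n : ℕ} {p : ℝ} (hp0 : 0 < p) (hp1 : p < 1) {j : ℕ}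
    (hj1 : 1 ≤ j) (hjn : j + 1 ≤ n) :
    p * ((n:ℝ)-(j:ℝ)) * ∑ k ∈ range j, binomPMF n p k
      ≤ (1-p) * (j:ℝ) * ∑ k ∈ range (j+1), binomPMF n p k := by
  have hq0 : (0:ℝ) < 1 - p := by linarith
  have hterm : ∀ k ∈ range j, p * ((n:ℝ)-(j:ℝ)) * binomPMF n p k
      ≤ (1-p) * (j:ℝ) * binomPMF n p (k+1) := by
    intro k hk
    have hkj : k < j := Finset.mem_range.mp hk
    have hkn : k < n := by omega
    have hrec := bin_rec p hkn
    have hk1 : (0:ℝ) < (k:ℝ)+1 := by positivity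
    have hkjR : (k:ℝ)+1 ≤ (j:ℝ) := by exact_mod_cast hkj
    have hjnR : (j:ℝ)+1 ≤ (n:ℝ) := by exact_mod_cast hjn
    have hBk := bin_nonneg (n := n) hp0 hp1 k
    rw [← mul_le_mul_iff_of_pos_right hk1]
    have hR : (1-p) * (j:ℝ) * binomPMF n p (k+1) * ((k:ℝ)+1)
        = (j:ℝ) * (((n:ℝ)-(k:ℝ)) * p * binomPMF n p k) := by
      rw [← hrec]; ring
    rw [hR]
    have hnat : ((n:ℝ)-(j:ℝ))*((k:ℝ)+1) ≤ (j:ℝ)*((n:ℝ)-(k:ℝ)) := by nlinarith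
    nlinarith [mul_le_mul_of_nonneg_left hnat (mul_nonneg hp0.le hBk)]
  calc p * ((n:ℝ)-(j:ℝ)) * ∑ k ∈ range j, binomPMF n p k
      = ∑ k ∈ range j, p * ((n:ℝ)-(j:ℝ)) * binomPMF n p k := by rw [Finset.mul_sum]
    _ ≤ ∑ k ∈ range j, (1-p) * (j:ℝ) * binomPMF n p (k+1) := Finset.sum_le_sum hterm
    _ = (1-p) * (j:ℝ) * ∑ k ∈ range j, binomPMF n p (k+1) := by rw [Finset.mul_sum]
    _ ≤ (1-p) * (j:ℝ) * ∑ k ∈ range (j+1), binomPMF n p k := by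
        apply mul_le_mul_of_nonneg_left _ (by positivity : (0:ℝ) ≤ (1-p) * (j:ℝ))
        rw [Finset.sum_range_succ' (fun k => binomPMF n p k) j]
        have := bin_nonneg (n := n) hp0 hp1 0
        linarith
    
lemma mono_right {n : ℕ} {p : ℝ} (hp0 : 0 < p) (hp1 : p < 1) {j : ℕ}
    (hj1 : 1 ≤ j) (hjn : j + 1 ≤ n) :
    (1-p) * (j:ℝ) * ∑ k ∈ Ico (j+1) (n+1), binomPMF n p k
      ≤ p * ((n:ℝ)-(j:ℝ)) * ∑ k ∈ Ico j (n+1), binomPMF n p k := by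
  have hq0 : (0:ℝ) < 1 - p := by linarith
  have hjnR : (j:ℝ)+1 ≤ (n:ℝ) := by exact_mod_cast hjn
  have h1 : ∑ k ∈ Ico (j+1) (n+1), binomPMF n p k
      = ∑ i ∈ range (n-j), binomPMF n p (j+1+i) := by
    rw [Finset.sum_Ico_eq_sum_range, show n+1-(j+1) = n-j by omega]
  have h2 : ∑ k ∈ Ico j n, binomPMF n p k = ∑ i ∈ range (n-j), binomPMF n p (j+i) :=
    Finset.sum_Ico_eq_sum_range (fun k => binomPMF n p k) j n
  have hterm : ∀ i ∈ range (n-j), (1-p) * (j:ℝ) * binomPMF n p (j+1+i)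
      ≤ p * ((n:ℝ)-(j:ℝ)) * binomPMF n p (j+i) := by
    intro i hi
    have hin : i < n - j := Finset.mem_range.mp hi
    set k := j + i with hk
    have hkn : k < n := by omega
    have hrec := bin_rec p hkn
    have hk1 : (0:ℝ) < (k:ℝ)+1 := by positivity
    have hjkR : (j:ℝ) ≤ (k:ℝ) := by exact_mod_cast (by omega : j ≤ k)
    have hknR : (k:ℝ)+1 ≤ (n:ℝ) := by exact_mod_cast hkn
    have hBk := bin_nonneg (n := n) hp0 hp1 k
    have hshow : j + 1 + i = k + 1 := by omega
    rw [hshow, ← mul_le_mul_iff_of_pos_right hk1]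
    have hL : (1-p) * (j:ℝ) * binomPMF n p (k+1) * ((k:ℝ)+1)
        = (j:ℝ) * (((n:ℝ)-(k:ℝ)) * p * binomPMF n p k) := by
      rw [← hrec]; ring
    rw [hL]
    have hnat : (j:ℝ)*((n:ℝ)-(k:ℝ)) ≤ ((n:ℝ)-(j:ℝ))*((k:ℝ)+1) := by nlinarith
    nlinarith [mul_le_mul_of_nonneg_left hnat (mul_nonneg hp0.le hBk)]
  have h3 : ∑ k ∈ Ico j n, binomPMF n p k ≤ ∑ k ∈ Ico j (n+1), binomPMF n p k := by
    apply Finset.sum_le_sum_of_subset_of_nonneg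
    · apply Finset.Ico_subset_Ico_right; omega
    · intro k _ _; exact bin_nonneg hp0 hp1 k
  calc (1-p) * (j:ℝ) * ∑ k ∈ Ico (j+1) (n+1), binomPMF n p k
      = ∑ i ∈ range (n-j), (1-p) * (j:ℝ) * binomPMF n p (j+1+i) := by
        rw [h1, Finset.mul_sum]
    _ ≤ ∑ i ∈ range (n-j), p * ((n:ℝ)-(j:ℝ)) * binomPMF n p (j+i) :=
        Finset.sum_le_sum hterm
    _ = p * ((n:ℝ)-(j:ℝ)) * ∑ k ∈ Ico j n, binomPMF n p k := by
        rw [h2, Finset.mul_sum]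
    _ ≤ p * ((n:ℝ)-(j:ℝ)) * ∑ k ∈ Ico j (n+1), binomPMF n p k := by
        apply mul_le_mul_of_nonneg_left h3
        apply mul_nonneg hp0.le
        linarith

lemma phi_mono {n : ℕ} {p : ℝ} (hp0 : 0 < p) (hp1 : p < 1) {m j : ℕ}
    (hm : m ≤ n) (hj1 : 1 ≤ j) (hjn : j + 1 ≤ n) (hne : m ≠ j) :
    fF n p {m} (j+1) ≤ fF n p {m} j := by
  have hq0 : (0:ℝ) < 1 - p := by linarith
  have hjR : (1:ℝ) ≤ (j:ℝ) := by exact_mod_cast hj1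
  have hBj := bin_pos (n := n) hp0 hp1 (show j ≤ n by omega)
  have hBj1 := bin_pos (n := n) hp0 hp1 (show j+1 ≤ n by omega)
  have hBm := bin_nonneg (n := n) hp0 hp1 m
  have hrec := bin_rec p (show j < n by omega)
  set G : ℕ → ℝ := fun t => ∑ k ∈ range t, binomPMF n p k with hGdef
  have hDj : (0:ℝ) < (1-p) * (j:ℝ) * binomPMF n p j := by
    apply mul_pos (mul_pos hq0 (by linarith)) hBj
  have hDj1 : (0:ℝ) < (1-p) * ((j:ℝ)+1) * binomPMF n p (j+1) := by
    apply mul_pos (mul_pos hq0 (by linarith)) hBj1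
  have hD1eq : (1-p) * ((j:ℝ)+1) * binomPMF n p (j+1)
      = p * ((n:ℝ)-(j:ℝ)) * binomPMF n p j := by linarith [hrec]
  unfold fF
  rw [show ((j+1:ℕ):ℝ) = (j:ℝ)+1 by push_cast; ring]
  rw [div_le_div_iff₀ hDj1 hDj]
  rw [SF_singleton, SF_singleton]
  rcases Nat.lt_or_ge j m with hmj | hmj
  · -- j < m : neither m < j nor m < j+1
    rw [if_neg (by omega), if_neg (by omega)]
    have hK1 := mono_left hp0 hp1 hj1 hjn
    have step := mul_le_mul_of_nonneg_left hK1
      (mul_nonneg hBm hBj.le : (0:ℝ) ≤ binomPMF n p m * binomPMF n p j)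
    have e : binomPMF n p m * (G j) * ((1-p) * ((j:ℝ)+1) * binomPMF n p (j+1))
        = binomPMF n p m * (G j) * (p * ((n:ℝ)-(j:ℝ)) * binomPMF n p j) := by
      rw [hD1eq]
    nlinarith [step, e]
  · -- m < j (m ≠ j) : both indicators true
    have hmj' : m < j := by omega
    rw [if_pos (by omega), if_pos (by omega)]
    have hK2' := mono_right hp0 hp1 hj1 hjn
    have hc1 : ∑ k ∈ Ico (j+1) (n+1), binomPMF n p k = 1 - G (j+1) :=
      G_compl p (by omega)
    have hc2 : ∑ k ∈ Ico j (n+1), binomPMF n p k = 1 - G j :=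
      G_compl p (by omega)
    rw [hc1, hc2] at hK2'
    have step := mul_le_mul_of_nonneg_left hK2'
      (mul_nonneg hBm hBj.le : (0:ℝ) ≤ binomPMF n p m * binomPMF n p j)
    have e : binomPMF n p m * (1 - G j) * ((1-p) * ((j:ℝ)+1) * binomPMF n p (j+1))
        = binomPMF n p m * (1 - G j) * (p * ((n:ℝ)-(j:ℝ)) * binomPMF n p j) := by
      rw [hD1eq]
    nlinarith [step, e]

lemma delta_self_nonneg {n : ℕ} {p : ℝ} (hp0 : 0 < p) (hp1 : p < 1) {j : ℕ}
    (hj1 : 1 ≤ j) (hjn : j + 1 ≤ n) :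
    0 ≤ fF n p {j} (j+1) - fF n p {j} j := by
  have hq0 : (0:ℝ) < 1 - p := by linarith
  have hjR : (1:ℝ) ≤ (j:ℝ) := by exact_mod_cast hj1
  have hBj := bin_pos (n := n) hp0 hp1 (show j ≤ n by omega)
  have hBj1 := bin_pos (n := n) hp0 hp1 (show j+1 ≤ n by omega)
  have hSnn : 0 ≤ SF n p {j} (j+1) := by
    rw [SF_singleton, if_pos (by omega)]
    have h1 : ∑ k ∈ range (j+1), binomPMF n p k ≤ 1 := by
      have h2 := G_compl (n := n) p (show j+1 ≤ n+1 by omega)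
      have h3 : 0 ≤ ∑ k ∈ Ico (j+1) (n+1), binomPMF n p k :=
        Finset.sum_nonneg (fun k _ => bin_nonneg (n := n) hp0 hp1 k)
      linarith
    nlinarith [hBj.le]
  have hSnp : SF n p {j} j ≤ 0 := by
    rw [SF_singleton, if_neg (by omega)]
    have h3 : 0 ≤ ∑ k ∈ range j, binomPMF n p k :=
      Finset.sum_nonneg (fun k _ => bin_nonneg (n := n) hp0 hp1 k)
    nlinarith [hBj.le]
  have h4 : 0 ≤ fF n p {j} (j+1) := by
    unfold fF
    apply div_nonneg hSnn
    rw [show ((j+1:ℕ):ℝ) = (j:ℝ)+1 by push_cast; ring]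
    positivity
  have h5 : fF n p {j} j ≤ 0 := by
    unfold fF
    apply div_nonpos_of_nonpos_of_nonneg hSnp
    positivity
  linarith

lemma delta_self_le {n : ℕ} {p : ℝ} (hp0 : 0 < p) (hp1 : p < 1) {j : ℕ}
    (hj1 : 1 ≤ j) (hjn : j + 1 ≤ n) :
    fF n p {j} (j+1) - fF n p {j} j ≤ 1 / ((n:ℝ) * p * (1-p)) := by
  have hq0 : (0:ℝ) < 1 - p := by linarith
  obtain ⟨i, rfl⟩ : ∃ i, j = i + 1 := ⟨j - 1, by omega⟩
  have hjnR : ((i:ℝ)+1)+1 ≤ (n:ℝ) := by exact_mod_cast hjn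
  have hBj := bin_pos (n := n) hp0 hp1 (show i+1 ≤ n by omega)
  have hBj1 := bin_pos (n := n) hp0 hp1 (show i+2 ≤ n by omega)
  have hrec := bin_rec p (show i+1 < n by omega)
  push_cast at hrec
  have hD1eq : (1-p) * (((i:ℝ)+1)+1) * binomPMF n p (i+2)
      = p * ((n:ℝ)-((i:ℝ)+1)) * binomPMF n p (i+1) := by
    have : binomPMF n p (i+1+1) = binomPMF n p (i+2) := rfl
    linarith [hrec, this ▸ hrec]
  have hapos : (0:ℝ) < p * ((n:ℝ)-((i:ℝ)+1)) := by
    apply mul_pos hp0; linarith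
  have hbpos : (0:ℝ) < (1-p) * ((i:ℝ)+1) := by positivity
  have hD1pos : (0:ℝ) < (1-p) * (((i:ℝ)+1)+1) * binomPMF n p (i+2) := by
    apply mul_pos (mul_pos hq0 (by positivity)) hBj1
  set R := ∑ k ∈ Ico (i+2) (n+1), binomPMF n p k with hRdef
  set G := ∑ k ∈ range (i+1), binomPMF n p k with hGdef
  have hG2 : ∑ k ∈ range (i+2), binomPMF n p k = 1 - R := by
    have := G_compl (n := n) p (show i+2 ≤ n+1 by omega)
    rw [← hRdef] at this
    linarith
  have h1 : fF n p {i+1} (i+2) = R / (p * ((n:ℝ)-((i:ℝ)+1))) := by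
    show SF n p {i+1} (i+2) / ((1-p) * ((i+2:ℕ):ℝ) * binomPMF n p (i+2))
      = R / (p * ((n:ℝ)-((i:ℝ)+1)))
    rw [SF_singleton, if_pos (by omega), hG2]
    rw [show ((i+2:ℕ):ℝ) = ((i:ℝ)+1)+1 by push_cast; ring]
    rw [div_eq_div_iff hD1pos.ne' hapos.ne']
    linear_combination (binomPMF n p (i+1) * (p * ((n:ℝ)-((i:ℝ)+1)))) * (by ring :
        binomPMF n p (i+1) - binomPMF n p (i+1) * (1-R) = binomPMF n p (i+1) * R)
      - R * hD1eq + (binomPMF n p (i+1) - binomPMF n p (i+1)*(1-R)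
        - binomPMF n p (i+1)*R) * (p * ((n:ℝ)-((i:ℝ)+1)))
  have h2 : fF n p {i+1} (i+1) = -(G / ((1-p) * ((i:ℝ)+1))) := by
    show SF n p {i+1} (i+1) / ((1-p) * ((i+1:ℕ):ℝ) * binomPMF n p (i+1))
      = -(G / ((1-p) * ((i:ℝ)+1)))
    rw [SF_singleton, if_neg (by omega)]
    rw [show ((i+1:ℕ):ℝ) = (i:ℝ)+1 by push_cast; ring]
    rw [div_eq_iff (by positivity : ((1:ℝ)-p) * ((i:ℝ)+1) * binomPMF n p (i+1) ≠ 0)]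
    field_simp
    ring
  have hstep : fF n p {i+1} (i+1+1) = fF n p {i+1} (i+2) := rfl
  rw [hstep, h1, h2]
  have hcore := core hp0 hp1 (show i + 2 ≤ n by omega)
  rw [← hRdef, ← hGdef] at hcore
  linarith [hcore]

lemma fF_univ_zero (n : ℕ) {p : ℝ} {t : ℕ} (ht : t ≤ n+1) :
    fF n p (range (n+1)) t = 0 := by
  have hS : SF n p (range (n+1)) t = 0 := by
    unfold SF
    rw [bin_sum n p]
    apply Finset.sum_eq_zero
    intro k hk
    have hk' : k ∈ range (n+1) := by
      have := Finset.mem_range.mp hk; exact Finset.mem_range.mpr (by omega)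
    unfold chiF
    rw [if_pos hk']
    ring
  unfold fF
  rw [hS, zero_div]

lemma delta_le {n : ℕ} {p : ℝ} (hp0 : 0 < p) (hp1 : p < 1) {A : Finset ℕ}
    (hA : A ⊆ range (n+1)) {j : ℕ} (hj1 : 1 ≤ j) (hjn : j + 1 ≤ n) :
    fF n p A (j+1) - fF n p A j ≤ 1 / ((n:ℝ) * p * (1-p)) := by
  have hq0 : (0:ℝ) < 1 - p := by linarith
  have hd : (0:ℝ) < (n:ℝ) * p * (1-p) := by
    have h1 : (1:ℝ) ≤ (n:ℝ) := by
      have : 1 ≤ n := by omega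
      exact_mod_cast this
    positivity
  rw [fF_decomp n p A (j+1), fF_decomp n p A j, ← Finset.sum_sub_distrib]
  have hsplit := Finset.sum_inter_add_sum_sdiff A {j}
    (fun m => fF n p {m} (j+1) - fF n p {m} j)
  rw [← hsplit]
  have hdiff : ∑ m ∈ A \ {j}, (fF n p {m} (j+1) - fF n p {m} j) ≤ 0 := by
    apply Finset.sum_nonpos
    intro m hm
    have hmA : m ∈ A := (Finset.mem_sdiff.mp hm).1
    have hmj : m ≠ j := by
      have := (Finset.mem_sdiff.mp hm).2
      simp only [Finset.mem_singleton] at this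
      exact this
    have hmn : m ≤ n := by
      have := Finset.mem_range.mp (hA hmA); omega
    have := phi_mono hp0 hp1 hmn hj1 hjn hmj
    linarith
  have hinter : ∑ m ∈ A ∩ {j}, (fF n p {m} (j+1) - fF n p {m} j)
      ≤ 1 / ((n:ℝ) * p * (1-p)) := by
    by_cases hj : j ∈ A
    · rw [Finset.inter_singleton_of_mem hj, Finset.sum_singleton]
      exact delta_self_le hp0 hp1 hj1 hjn
    · rw [Finset.inter_singleton_of_notMem hj, Finset.sum_empty]
      positivity
  linarith

lemma delta_abs {n : ℕ} {p : ℝ} (hp0 : 0 < p) (hp1 : p < 1) {A : Finset ℕ}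
    (hA : A ⊆ range (n+1)) {j : ℕ} (hj1 : 1 ≤ j) (hjn : j + 1 ≤ n) :
    |fF n p A (j+1) - fF n p A j| ≤ 1 / ((n:ℝ) * p * (1-p)) := by
  rw [abs_le]
  constructor
  · have hcompl : fF n p A (j+1) - fF n p A j
        = -((fF n p (range (n+1) \ A) (j+1)) - fF n p (range (n+1) \ A) j) := by
      have h1 : ∀ t ≤ n+1, fF n p A t + fF n p (range (n+1) \ A) t = 0 := by
        intro t ht
        rw [fF_decomp n p A t, fF_decomp n p (range (n+1) \ A) t]
        rw [add_comm, Finset.sum_sdiff hA, ← fF_decomp]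
        exact fF_univ_zero n ht
      have h2 := h1 (j+1) (by omega)
      have h3 := h1 j (by omega)
      linarith
    rw [hcompl, neg_le_neg_iff]
    exact delta_le hp0 hp1 (Finset.sdiff_subset) hj1 hjn
  · exact delta_le hp0 hp1 hA hj1 hjn

lemma choose_real (a k : ℕ) :
    (a.choose (k+1) : ℝ) * ((k:ℝ)+1) = (a.choose k : ℝ) * ((a:ℝ)-(k:ℝ)) := by
  rcases Nat.lt_or_ge k a with h | h
  · have := Nat.choose_succ_right_eq a k
    have hc : ((a.choose (k+1)) : ℝ) * ((k:ℝ)+1) = (a.choose k : ℝ) * (((a - k : ℕ)) : ℝ) := by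
      exact_mod_cast this
    rw [Nat.cast_sub h.le] at hc
    exact hc
  · have h1 : a.choose (k+1) = 0 := Nat.choose_eq_zero_of_lt (by omega)
    rcases Nat.eq_or_lt_of_le h with h2 | h2
    · rw [h1, ← h2]
      push_cast
      ring
    · have h3 : a.choose k = 0 := Nat.choose_eq_zero_of_lt h2
      rw [h1, h3]
      push_cast
      ring

lemma vand1 (a b t : ℕ) :
    ∑ j ∈ range (t+1), a.choose j * b.choose (t-j) = (a+b).choose t := by
  rw [Nat.add_choose_eq]
  rw [Finset.Nat.sum_antidiagonal_eq_sum_range_succ_mk]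

lemma hyper_nonneg (N W n k : ℕ) : 0 ≤ hyperPMF N W n k := by
  unfold hyperPMF
  positivity

lemma hyper_sum {N W n : ℕ} (hWN : W ≤ N) (hnN : n ≤ N) :
    ∑ k ∈ range (n+1), hyperPMF N W n k = 1 := by
  unfold hyperPMF
  rw [← Finset.sum_div]
  have h1 : ∑ k ∈ range (n+1), ((W.choose k : ℝ) * ((N - W).choose (n - k) : ℝ))
      = ((∑ k ∈ range (n+1), W.choose k * (N - W).choose (n - k) : ℕ) : ℝ) := by
    push_cast
    rfl
  rw [h1, vand1 W (N-W) n, show W + (N - W) = N by omega]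
  have h2 : (0:ℝ) < (N.choose n : ℝ) := by
    exact_mod_cast Nat.choose_pos hnN
  rw [div_self h2.ne']

lemma hyper_shift_ptwise {N W n : ℕ} (hWN : W ≤ N) {j : ℕ} (hj : j < n) :
    hyperPMF N W n j * (((W:ℝ)-(j:ℝ)) * ((n:ℝ)-(j:ℝ)))
      = hyperPMF N W n (j+1) * (((j:ℝ)+1) * (((N:ℝ)-(W:ℝ)) - ((n:ℝ)-((j:ℝ)+1)))) := by
  unfold hyperPMF
  set M := N - W with hMdef
  have hM : (M:ℝ) = (N:ℝ)-(W:ℝ) := by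
    rw [hMdef]; push_cast [Nat.cast_sub hWN]; ring
  have e1 := choose_real W j
  have e2 := choose_real M (n-j-1)
  rw [show n-j-1+1 = n-j by omega] at e2
  have hcast : ((n-j-1 : ℕ):ℝ) = (n:ℝ)-(j:ℝ)-1 := by
    rw [Nat.cast_sub (by omega : 1 ≤ n - j), Nat.cast_sub (by omega : j ≤ n)]
    push_cast
    ring
  rw [hcast] at e2
  rw [show n - (j+1) = n-j-1 by omega]
  rw [div_mul_eq_mul_div, div_mul_eq_mul_div]
  congr 1
  rw [← hM]
  linear_combination (-((M.choose (n-j) : ℝ) * ((n:ℝ)-(j:ℝ)))) * e1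
    + ((W.choose (j+1) : ℝ) * ((j:ℝ)+1)) * e2

lemma succ_mul_choose_real (a k : ℕ) :
    ((a+1).choose (k+1) : ℝ) * ((k:ℝ)+1) = ((a:ℝ)+1) * (a.choose k : ℝ) := by
  have := Nat.add_one_mul_choose_eq a k
  have hc : ((a+1:ℕ):ℝ) * (a.choose k : ℝ) = ((a+1).choose (k+1) : ℝ) * ((k+1:ℕ):ℝ) := by
    exact_mod_cast congrArg (fun x : ℕ => (x:ℝ)) this
  push_cast at hc
  linarith [hc]

lemma hyper_shift_sum {N W n : ℕ} (hWN : W ≤ N) (f : ℕ → ℝ) :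
    ∑ j ∈ range (n+1), hyperPMF N W n j * (((W:ℝ)-(j:ℝ)) * ((n:ℝ)-(j:ℝ))) * f (j+1)
      = ∑ j ∈ range (n+1), hyperPMF N W n j * ((j:ℝ) * (((N:ℝ)-(W:ℝ)) - ((n:ℝ)-(j:ℝ)))) * f j := by
  rw [Finset.sum_range_succ, Finset.sum_range_succ']
  simp only [Nat.cast_zero, sub_self, mul_zero, zero_mul, add_zero, mul_zero, zero_mul]
  apply Finset.sum_congr rfl
  intro j hj
  have hjn : j < n := Finset.mem_range.mp hj
  have hpt := hyper_shift_ptwise hWN hjn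
  push_cast
  calc hyperPMF N W n j * (((W:ℝ)-(j:ℝ)) * ((n:ℝ)-(j:ℝ))) * f (j+1)
      = (hyperPMF N W n j * (((W:ℝ)-(j:ℝ)) * ((n:ℝ)-(j:ℝ)))) * f (j+1) := by ring
    _ = (hyperPMF N W n (j+1) * (((j:ℝ)+1) * (((N:ℝ)-(W:ℝ)) - ((n:ℝ)-((j:ℝ)+1))))) * f (j+1) := by
        rw [hpt]
    _ = hyperPMF N W n (j+1) * (((j:ℝ)+1) * (((N:ℝ)-(W:ℝ)) - ((n:ℝ)-((j:ℝ)+1)))) * f (j+1) := by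
        ring

lemma hyper_weighted {N W n : ℕ} (hW : 1 ≤ W) (hWN : W < N) (hn2 : 2 ≤ n) (hnN : n ≤ N) :
    ∑ j ∈ range (n+1), hyperPMF N W n j * ((j:ℝ) * ((n:ℝ)-(j:ℝ)))
      = (n:ℝ)*((n:ℝ)-1)*(W:ℝ)*((N:ℝ)-(W:ℝ)) / ((N:ℝ)*((N:ℝ)-1)) := by
  obtain ⟨w, rfl⟩ : ∃ w, W = w + 1 := ⟨W - 1, by omega⟩
  obtain ⟨ν, rfl⟩ : ∃ ν, n = ν + 2 := ⟨n - 2, by omega⟩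
  obtain ⟨m, rfl⟩ : ∃ m, N = w + m + 2 := ⟨N - w - 2, by omega⟩
  have hsum : ∑ j ∈ range (ν+2+1), hyperPMF (w+m+2) (w+1) (ν+2) j * ((j:ℝ) * (((ν+2:ℕ):ℝ)-(j:ℝ)))
      = (((w+1)*(m+1)*((w+m).choose ν) : ℕ) : ℝ) / (((w+m+2).choose (ν+2) : ℕ) : ℝ) := by
    unfold hyperPMF
    rw [show w + m + 2 - (w+1) = m + 1 by omega]
    have hform : ∀ j ∈ range (ν+2+1),
        ((w+1).choose j : ℝ) * ((m+1).choose (ν+2-j) : ℝ) / ((w+m+2).choose (ν+2) : ℝ)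
          * ((j:ℝ) * (((ν+2:ℕ):ℝ)-(j:ℝ)))
        = (((w+1).choose j : ℝ) * ((m+1).choose (ν+2-j) : ℝ) * ((j:ℝ) * (((ν+2:ℕ):ℝ)-(j:ℝ))))
          / ((w+m+2).choose (ν+2) : ℝ) := by
      intro j _; ring
    rw [Finset.sum_congr rfl hform, ← Finset.sum_div]
    congr 1
    -- numerator sum identity
    rw [Finset.sum_range_succ']
    have h0 : ((w+1).choose 0 : ℝ) * ((m+1).choose (ν+2-0) : ℝ)
        * (((0:ℕ):ℝ) * (((ν+2:ℕ):ℝ)-((0:ℕ):ℝ))) = 0 := by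
      push_cast; ring
    rw [h0, add_zero]
    rw [Finset.sum_range_succ]
    have htop : ((w+1).choose (ν+1+1) : ℝ) * ((m+1).choose (ν+2-(ν+1+1)) : ℝ)
        * (((ν+1+1:ℕ):ℝ) * (((ν+2:ℕ):ℝ)-((ν+1+1:ℕ):ℝ))) = 0 := by
      push_cast; ring
    rw [htop, add_zero]
    have hterm : ∀ i ∈ range (ν+1),
        ((w+1).choose (i+1) : ℝ) * ((m+1).choose (ν+2-(i+1)) : ℝ)
          * (((i+1:ℕ):ℝ) * (((ν+2:ℕ):ℝ)-((i+1:ℕ):ℝ)))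
        = ((w:ℝ)+1) * ((m:ℝ)+1) * ((w.choose i : ℝ) * (m.choose (ν-i) : ℝ)) := by
      intro i hi
      have hiv : i ≤ ν := by have := Finset.mem_range.mp hi; omega
      rw [show ν+2-(i+1) = (ν-i)+1 by omega]
      have e1 := succ_mul_choose_real w i
      have e2 := succ_mul_choose_real m (ν-i)
      have hcast : ((ν-i:ℕ):ℝ) = (ν:ℝ)-(i:ℝ) := by
        rw [Nat.cast_sub hiv]
      rw [hcast] at e2
      have hc2 : (((ν+2:ℕ)):ℝ) - ((i+1:ℕ):ℝ) = ((ν:ℝ)-(i:ℝ))+1 := by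
        push_cast; ring
      rw [hc2, show ((i+1:ℕ):ℝ) = (i:ℝ)+1 by push_cast; ring]
      linear_combination (((m+1).choose ((ν-i)+1) : ℝ) * (((ν:ℝ)-(i:ℝ))+1)) * e1
        + (((w:ℝ)+1) * (w.choose i : ℝ)) * e2
    rw [Finset.sum_congr rfl hterm, ← Finset.mul_sum]
    have hv : ∑ i ∈ range (ν+1), ((w.choose i : ℝ) * (m.choose (ν-i) : ℝ))
        = ((w+m).choose ν : ℝ) := by
      rw [← vand1 w m ν]
      push_cast
      rfl
    rw [hv]
    push_cast
    ring
  rw [hsum]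
  -- ratio identity
  have hr1 := Nat.add_one_mul_choose_eq (w+m+1) (ν+1)
  have hr2 := Nat.add_one_mul_choose_eq (w+m) ν
  have hratio : (w+m+2)*(w+m+1)*((w+m).choose ν) = (ν+2)*(ν+1)*((w+m+2).choose (ν+2)) := by
    calc (w+m+2)*(w+m+1)*((w+m).choose ν)
        = (w+m+2) * ((w+m+1) * (w+m).choose ν) := by ring
      _ = (w+m+2) * ((w+m+1).choose (ν+1) * (ν+1)) := by rw [← hr2]
      _ = ((w+m+2) * (w+m+1).choose (ν+1)) * (ν+1) := by ring
      _ = ((w+m+2).choose (ν+2) * (ν+2)) * (ν+1) := by rw [← hr1]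
      _ = (ν+2)*(ν+1)*((w+m+2).choose (ν+2)) := by ring
  have hCpos : (0:ℝ) < ((w+m+2).choose (ν+2) : ℝ) := by
    exact_mod_cast Nat.choose_pos (show ν+2 ≤ w+m+2 by omega)
  have hNpos : (0:ℝ) < ((w+m+2:ℕ):ℝ) * (((w+m+2:ℕ):ℝ) - 1) := by
    push_cast
    nlinarith [Nat.cast_nonneg (α := ℝ) w, Nat.cast_nonneg (α := ℝ) m]
  rw [div_eq_div_iff hCpos.ne' hNpos.ne']
  have hratioR : ((w+m+2:ℕ):ℝ)*((w+m+1:ℕ):ℝ)*((w+m).choose ν : ℝ)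
      = ((ν+2:ℕ):ℝ)*((ν+1:ℕ):ℝ)*((w+m+2).choose (ν+2) : ℝ) := by
    exact_mod_cast congrArg (fun x : ℕ => (x:ℝ)) hratio
  push_cast at hratioR ⊢
  linear_combination (((w:ℝ)+1)*((m:ℝ)+1)) * hratioR

lemma chi_mul_sum {n : ℕ} {A : Finset ℕ} (hA : A ⊆ range (n+1)) (g : ℕ → ℝ) :
    ∑ k ∈ range (n+1), chiF A k * g k = ∑ m ∈ A, g m := by
  unfold chiF
  have h1 : ∀ k ∈ range (n+1), (if k ∈ A then (1:ℝ) else 0) * g k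
      = (if k ∈ A then g k else 0) := by
    intro k _; split <;> simp
  rw [Finset.sum_congr rfl h1, Finset.sum_ite_mem]
  congr 1
  exact Finset.inter_eq_right.mpr hA

lemma SF_top {n : ℕ} {p : ℝ} {A : Finset ℕ} (hA : A ⊆ range (n+1)) :
    SF n p A (n+1) = 0 := by
  unfold SF
  have h1 : ∑ k ∈ range (n+1), (chiF A k - ∑ m ∈ A, binomPMF n p m) * binomPMF n p k
      = ∑ k ∈ range (n+1), chiF A k * binomPMF n p k
        - (∑ m ∈ A, binomPMF n p m) * ∑ k ∈ range (n+1), binomPMF n p k := by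
    rw [Finset.mul_sum, ← Finset.sum_sub_distrib]
    exact Finset.sum_congr rfl (fun k _ => by ring)
  rw [h1, bin_sum n p, chi_mul_sum hA]
  ring

lemma stein_eq_all {n : ℕ} {p : ℝ} (hp0 : 0 < p) (hp1 : p < 1) {A : Finset ℕ}
    (hA : A ⊆ range (n+1)) {j : ℕ} (hj : j ≤ n) :
    p * ((n:ℝ)-(j:ℝ)) * fF n p A (j+1) - (1-p) * (j:ℝ) * fF n p A j
      = chiF A j - ∑ m ∈ A, binomPMF n p m := by
  rcases Nat.lt_or_ge j n with h | h
  · exact stein_eq n hp0 hp1 A h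
  · have hjn : j = n := by omega
    rw [hjn]
    have hBn : binomPMF n p n ≠ 0 := (bin_pos hp0 hp1 (le_refl n)).ne'
    have hS := SF_top (n := n) (p := p) hA
    have h2 : SF n p A (n+1) = SF n p A n
        + (chiF A n - ∑ m ∈ A, binomPMF n p m) * binomPMF n p n := by
      unfold SF
      rw [Finset.sum_range_succ]
    rw [hS] at h2
    have h3 : (1-p) * (n:ℝ) * fF n p A n = SF n p A n / binomPMF n p n :=
      SF_zero_mul n hp0 hp1 A (le_refl n)
    have h4 : SF n p A n / binomPMF n p n
        = -(chiF A n - ∑ m ∈ A, binomPMF n p m) := by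
      rw [show SF n p A n = -((chiF A n - ∑ m ∈ A, binomPMF n p m) * binomPMF n p n) by
        linarith [h2]]
      field_simp
    rw [h3, h4]
    ring

lemma main_bound {N W n : ℕ} {p : ℝ} (hW : 0 < W) (hWltN : W < N)
    (hn2 : 2 ≤ n) (hnN : n ≤ N) (hp : p = (W:ℝ)/(N:ℝ)) (hp0 : 0 < p) (hp1 : p < 1)
    {A : Finset ℕ} (hA : A ⊆ range (n+1)) :
    |∑ j ∈ A, (hyperPMF N W n j - binomPMF n p j)| ≤ ((n:ℝ)-1)/((N:ℝ)-1) := by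
  have hq0 : (0:ℝ) < 1 - p := by linarith
  have hNR : (0:ℝ) < (N:ℝ) := by
    have : 0 < N := by omega
    exact_mod_cast this
  have hN1R : (1:ℝ) < (N:ℝ) := by
    have : 1 < N := by omega
    exact_mod_cast this
  have hnR : (2:ℝ) ≤ (n:ℝ) := by exact_mod_cast hn2
  have hNp : (N:ℝ) * p = (W:ℝ) := by rw [hp]; field_simp
  have hNq : (N:ℝ) * (1-p) = (N:ℝ) - (W:ℝ) := by rw [hp]; field_simp
  have hd : (0:ℝ) < (n:ℝ) * p * (1-p) := by positivity
  set f : ℕ → ℝ := fF n p A with hf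
  set μ : ℝ := ∑ m ∈ A, binomPMF n p m with hμ
  -- pointwise claim
  have hpt : ∀ j ∈ range (n+1),
      (N:ℝ) * (hyperPMF N W n j * (chiF A j - μ))
        = hyperPMF N W n j * (((W:ℝ)-(j:ℝ)) * ((n:ℝ)-(j:ℝ))) * f (j+1)
          - hyperPMF N W n j * ((j:ℝ) * (((N:ℝ)-(W:ℝ)) - ((n:ℝ)-(j:ℝ)))) * f j
          + hyperPMF N W n j * ((j:ℝ) * ((n:ℝ)-(j:ℝ))) * (f (j+1) - f j) := by
    intro j hj
    have hjn : j ≤ n := by have := Finset.mem_range.mp hj; omega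
    have hse := stein_eq_all hp0 hp1 hA hjn
    rw [← hμ] at hse
    linear_combination (-((N:ℝ) * hyperPMF N W n j)) * hse
      + (hyperPMF N W n j * ((n:ℝ)-(j:ℝ)) * f (j+1)) * hNp
      - (hyperPMF N W n j * (j:ℝ) * f j) * hNq
  have hsum := Finset.sum_congr rfl hpt
  rw [← Finset.mul_sum] at hsum
  rw [show (∑ j ∈ range (n+1),
      (hyperPMF N W n j * (((W:ℝ)-(j:ℝ)) * ((n:ℝ)-(j:ℝ))) * f (j+1)
        - hyperPMF N W n j * ((j:ℝ) * (((N:ℝ)-(W:ℝ)) - ((n:ℝ)-(j:ℝ)))) * f j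
        + hyperPMF N W n j * ((j:ℝ) * ((n:ℝ)-(j:ℝ))) * (f (j+1) - f j)))
    = (∑ j ∈ range (n+1), hyperPMF N W n j * (((W:ℝ)-(j:ℝ)) * ((n:ℝ)-(j:ℝ))) * f (j+1))
      - (∑ j ∈ range (n+1), hyperPMF N W n j * ((j:ℝ) * (((N:ℝ)-(W:ℝ)) - ((n:ℝ)-(j:ℝ)))) * f j)
      + (∑ j ∈ range (n+1), hyperPMF N W n j * ((j:ℝ) * ((n:ℝ)-(j:ℝ))) * (f (j+1) - f j)) by
      rw [← Finset.sum_sub_distrib, ← Finset.sum_add_distrib]] at hsum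
  rw [hyper_shift_sum (le_of_lt hWltN) f] at hsum
  rw [sub_self, zero_add] at hsum
  -- LHS simplification
  have hLHS : ∑ j ∈ range (n+1), hyperPMF N W n j * (chiF A j - μ)
      = ∑ j ∈ A, (hyperPMF N W n j - binomPMF n p j) := by
    have h1 : ∀ j ∈ range (n+1), hyperPMF N W n j * (chiF A j - μ)
        = chiF A j * hyperPMF N W n j - μ * hyperPMF N W n j := by
      intro j _; ring
    rw [Finset.sum_congr rfl h1, Finset.sum_sub_distrib, ← Finset.mul_sum]
    rw [chi_mul_sum hA (fun j => hyperPMF N W n j)]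
    rw [hyper_sum hWltN.le hnN, mul_one]
    rw [Finset.sum_sub_distrib, ← hμ]
  rw [hLHS] at hsum
  set S := ∑ j ∈ range (n+1), hyperPMF N W n j * ((j:ℝ) * ((n:ℝ)-(j:ℝ))) * (f (j+1) - f j)
    with hS
  have hXeq : ∑ j ∈ A, (hyperPMF N W n j - binomPMF n p j) = S / (N:ℝ) := by
    rw [eq_div_iff hNR.ne']
    linarith [hsum]
  -- bound |S|
  have hterm : ∀ j ∈ range (n+1),
      |hyperPMF N W n j * ((j:ℝ) * ((n:ℝ)-(j:ℝ))) * (f (j+1) - f j)|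
        ≤ hyperPMF N W n j * ((j:ℝ) * ((n:ℝ)-(j:ℝ))) * (1 / ((n:ℝ)*p*(1-p))) := by
    intro j hj
    have hjn : j ≤ n := by have := Finset.mem_range.mp hj; omega
    rcases Nat.eq_zero_or_pos j with rfl | hj1
    · simp
    rcases Nat.eq_or_lt_of_le hjn with rfl | hjlt
    · rw [sub_self]
      simp
    have hH := hyper_nonneg N W n j
    have hXnn : (0:ℝ) ≤ hyperPMF N W n j * ((j:ℝ) * ((n:ℝ)-(j:ℝ))) := by
      apply mul_nonneg hH
      apply mul_nonneg (Nat.cast_nonneg j)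
      have : (j:ℝ) ≤ (n:ℝ) := by exact_mod_cast hjn
      linarith
    rw [abs_mul, abs_of_nonneg hXnn]
    exact mul_le_mul_of_nonneg_left (delta_abs hp0 hp1 hA hj1 hjlt) hXnn
  have hSbound : |S| ≤ (∑ j ∈ range (n+1), hyperPMF N W n j * ((j:ℝ) * ((n:ℝ)-(j:ℝ))))
      * (1 / ((n:ℝ)*p*(1-p))) := by
    calc |S| ≤ ∑ j ∈ range (n+1),
        |hyperPMF N W n j * ((j:ℝ) * ((n:ℝ)-(j:ℝ))) * (f (j+1) - f j)| :=
          Finset.abs_sum_le_sum_abs _ _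
      _ ≤ ∑ j ∈ range (n+1),
          hyperPMF N W n j * ((j:ℝ) * ((n:ℝ)-(j:ℝ))) * (1 / ((n:ℝ)*p*(1-p))) :=
          Finset.sum_le_sum hterm
      _ = (∑ j ∈ range (n+1), hyperPMF N W n j * ((j:ℝ) * ((n:ℝ)-(j:ℝ))))
          * (1 / ((n:ℝ)*p*(1-p))) := by rw [← Finset.sum_mul]
  rw [hyper_weighted hW hWltN hn2 hnN] at hSbound
  rw [hXeq, abs_div, abs_of_pos hNR]
  have hfinal : ((n:ℝ)*((n:ℝ)-1)*(W:ℝ)*((N:ℝ)-(W:ℝ)) / ((N:ℝ)*((N:ℝ)-1)))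
      * (1 / ((n:ℝ)*p*(1-p))) / (N:ℝ) = ((n:ℝ)-1)/((N:ℝ)-1) := by
    rw [← hNp]
    have h1 : (n:ℝ) ≠ 0 := by linarith
    have h2 : p ≠ 0 := hp0.ne'
    have h3 : (1:ℝ)-p ≠ 0 := hq0.ne'
    have h4 : (N:ℝ) ≠ 0 := hNR.ne'
    have h5 : (N:ℝ)-1 ≠ 0 := by linarith
    field_simp
  rw [← hfinal]
  exact div_le_div_of_nonneg_right hSbound hNR.le


theorem stmt_9 (N W n : ℕ) (hN : 0 < N) (hW : 0 < W) (hn : 0 < n)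
    (hWN : W ≤ N) (hnN : n ≤ N) (p : ℝ) (hp : p = (W : ℝ) / N)
    (hp0 : 0 < p) (hp1 : p < 1) (hnp : 1 ≤ n * p * (1 - p)) :
    tvDist N W n p ≤ ((n : ℝ) - 1) / ((N : ℝ) - 1) := by
  have hNR : (0:ℝ) < (N:ℝ) := by exact_mod_cast hN
  have hWltN : W < N := by
    have h1 : (W:ℝ)/(N:ℝ) < 1 := hp ▸ hp1
    have h2 : (W:ℝ) < (N:ℝ) := by rwa [div_lt_one hNR] at h1
    exact_mod_cast h2
  have hn2 : 2 ≤ n := by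
    have hpq : p*(1-p) ≤ 1/4 := by nlinarith [sq_nonneg (p - 1/2)]
    have hnn : (0:ℝ) ≤ (n:ℝ) := Nat.cast_nonneg n
    have hnR : (2:ℝ) ≤ (n:ℝ) := by nlinarith [hnp]
    exact_mod_cast hnR
  unfold tvDist
  apply ciSup_le
  intro A
  have hmap : ∑ k ∈ A, (hyperPMF N W n ↑k - binomPMF n p ↑k)
      = ∑ j ∈ A.map ⟨Fin.val, Fin.val_injective⟩, (hyperPMF N W n j - binomPMF n p j) := by
    rw [Finset.sum_map]
    rfl
  rw [hmap]
  apply main_bound hW hWltN hn2 hnN hp hp0 hp1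
  intro j hj
  rw [Finset.mem_map] at hj
  obtain ⟨k, _, rfl⟩ := hj
  exact Finset.mem_range.mpr k.is_lt
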